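/- Let X be a quasi-median graph, Y ⊂ X a gated subgraph, J a hyperplane crossing Y (i.e. containing an edge of Y), and C ⊂ J a clique of X contained in J. If C contains a vertex of Y, then C ⊆ Y. -/

import Mathlib

open SimpleGraph

universe u

variable {V : Type u}

/-- Two vertices of a product of complete graphs are adjacent when they differ in
exactly one coordinate. -/
def HammingAdj {ι : Type u} {K : ι → Type u} (x y : ∀ i, K i) : Prop :=
  ∃ i, x i ≠ y i ∧ ∀ j, j ≠ i → x j = y j

/-- A quasi-median graph: a connected graph that is a retract of a Hamming graph
(a product of complete graphs); the retraction is a weak graph homomorphism. -/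
def IsQuasiMedianGraph (G : SimpleGraph V) : Prop :=
  G.Connected ∧ ∃ (ι : Type u) (K : ι → Type u) (f : V → ∀ i, K i) (g : (∀ i, K i) → V),
    (∀ v, g (f v) = v) ∧
    (∀ u v, G.Adj u v → HammingAdj (f u) (f v)) ∧
    (∀ x y, HammingAdj x y → g x = g y ∨ G.Adj (g x) (g y))

/-- Generating relation for hyperplanes: two edges belong to a common triangle, or
are opposite sides of an induced 4-cycle. -/
def QMEdgeRel (G : SimpleGraph V) (e f : Sym2 V) : Prop :=
  e ∈ G.edgeSet ∧ f ∈ G.edgeSet ∧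
  ((∃ a b c : V, e = s(a, b) ∧ f = s(a, c) ∧ G.Adj a b ∧ G.Adj a c ∧ G.Adj b c) ∨
   (∃ a b c d : V, e = s(a, b) ∧ f = s(d, c) ∧
     G.Adj a b ∧ G.Adj b c ∧ G.Adj c d ∧ G.Adj d a ∧
     ¬ G.Adj a c ∧ ¬ G.Adj b d ∧ a ≠ c ∧ b ≠ d))

/-- A hyperplane: the equivalence class of an edge under the relation generated by
`QMEdgeRel`. -/
def IsHyperplane (G : SimpleGraph V) (J : Set (Sym2 V)) : Prop :=
  ∃ e ∈ G.edgeSet, J = {f | Relation.EqvGen (QMEdgeRel G) e f}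

/-- A gated subgraph: every vertex admits a gate. -/
def IsGated (G : SimpleGraph V) (Y : Set V) : Prop :=
  Y.Nonempty ∧ ∀ x : V, ∃ y ∈ Y, ∀ z ∈ Y, G.dist x z = G.dist x y + G.dist y z

section Aux

variable {ι : Type u} {K : ι → Type u} {G : SimpleGraph V}
variable {f : V → ∀ i, K i} {g : (∀ i, K i) → V}

/-- If two points of the Hamming graph agree off a single coordinate, their images
under `g` are equal or adjacent. -/
lemma agree_off (hg : ∀ x y, HammingAdj x y → g x = g y ∨ G.Adj (g x) (g y))
    {x y : ∀ i, K i} (i : ι) (h : ∀ j, j ≠ i → x j = y j) :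
    g x = g y ∨ G.Adj (g x) (g y) := by
  by_cases hxy : x i = y i
  · left
    congr 1
    funext j
    by_cases hj : j = i
    · subst hj; exact hxy
    · exact h j hj
  · exact hg x y ⟨i, hxy, h⟩

/-- A Hamming edge differing at `i` agrees off `i`. -/
lemma coord_eq {x y : ∀ i, K i} (h : HammingAdj x y) {i : ι} (hi : x i ≠ y i) :
    ∀ j, j ≠ i → x j = y j := by
  obtain ⟨m, hm, hoff⟩ := h
  have him : i = m := by
    by_contra hne
    exact hi (hoff i hne)
  subst him
  exact hoff

lemma triangle_coord (hgf : ∀ v, g (f v) = v)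
    (hf : ∀ u v, G.Adj u v → HammingAdj (f u) (f v))
    {a b c : V} (hab : G.Adj a b) (hac : G.Adj a c) (hbc : G.Adj b c)
    {i : ι} (h : f a i ≠ f b i) : f a i ≠ f c i := by
  intro hceq
  have hoffab : ∀ j, j ≠ i → f a j = f b j := coord_eq (hf a b hab) h
  obtain ⟨j₀, hj₀, hoffac⟩ := hf a c hac
  obtain ⟨k₀, hk₀, hoffbc⟩ := hf b c hbc
  have hji : j₀ ≠ i := by
    intro hji; subst hji; exact hj₀ (hceq)
  -- f b i ≠ f c i, so k₀ = i
  have hbci : f b i ≠ f c i := by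
    rw [← hceq]; exact fun hh => h hh.symm
  have hki : k₀ = i := by
    by_contra hne
    exact hbci (hoffbc i (fun hh => hne hh.symm))
  -- f b j₀ ≠ f c j₀, so k₀ = j₀
  have hbcj : f b j₀ ≠ f c j₀ := by
    rw [← hoffab j₀ hji]
    exact hj₀
  have hkj : k₀ = j₀ := by
    by_contra hne
    exact hbcj (hoffbc j₀ (fun hh => hne hh.symm))
  exact hji (hkj ▸ hki)

lemma square_coord (hgf : ∀ v, g (f v) = v)
    (hf : ∀ u v, G.Adj u v → HammingAdj (f u) (f v))
    (hg : ∀ x y, HammingAdj x y → g x = g y ∨ G.Adj (g x) (g y))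
    {a b c d : V} (hab : G.Adj a b) (hbc : G.Adj b c) (hcd : G.Adj c d)
    (hda : G.Adj d a) (hac : ¬ G.Adj a c) (hbd : ¬ G.Adj b d)
    (hac' : a ≠ c) (hbd' : b ≠ d)
    {i : ι} (h : f a i ≠ f b i) : f d i ≠ f c i := by
  have hoffab : ∀ j, j ≠ i → f a j = f b j := coord_eq (hf a b hab) h
  obtain ⟨j₀, hj₀, hoffbc⟩ := hf b c hbc
  obtain ⟨l₀, hl₀, hoffda⟩ := hf d a hda
  -- j₀ ≠ i, else a and c agree off i
  have hji : j₀ ≠ i := by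
    intro hji; subst hji
    have : ∀ m, m ≠ j₀ → f a m = f c m := by
      intro m hm
      rw [hoffab m hm]; exact hoffbc m hm
    rcases agree_off (g := g) hg j₀ this with heq | hadj
    · rw [hgf, hgf] at heq; exact hac' heq
    · rw [hgf, hgf] at hadj; exact hac hadj
  -- l₀ ≠ i, else b and d agree off i
  have hli : l₀ ≠ i := by
    intro hli; subst hli
    have : ∀ m, m ≠ l₀ → f b m = f d m := by
      intro m hm
      rw [← hoffab m hm]; exact (hoffda m hm).symm
    rcases agree_off (g := g) hg l₀ this with heq | hadj
    · rw [hgf, hgf] at heq; exact hbd' heq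
    · rw [hgf, hgf] at hadj; exact hbd hadj
  have h1 : f d i = f a i := hoffda i (Ne.symm hli)
  have h2 : f c i = f b i := (hoffbc i (Ne.symm hji)).symm
  rw [h1, h2]
  exact h

/-- The property that an edge's endpoints differ in coordinate `i`. -/
def Pcoord (f : V → ∀ i, K i) (i : ι) (e : Sym2 V) : Prop :=
  ∀ u v, e = s(u, v) → f u i ≠ f v i

lemma pcoord_of {i : ι} {u v : V} (h : f u i ≠ f v i) : Pcoord f i s(u, v) := by
  intro u' v' h'
  rcases Sym2.eq_iff.mp h' with ⟨h1, h2⟩ | ⟨h1, h2⟩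
  · subst h1; subst h2; exact h
  · subst h1; subst h2; exact h.symm

lemma rel_coord (hgf : ∀ v, g (f v) = v)
    (hf : ∀ u v, G.Adj u v → HammingAdj (f u) (f v))
    (hg : ∀ x y, HammingAdj x y → g x = g y ∨ G.Adj (g x) (g y))
    {e e' : Sym2 V} (h : QMEdgeRel G e e') (i : ι) :
    Pcoord f i e ↔ Pcoord f i e' := by
  obtain ⟨-, -, ⟨a, b, c, he, he', hab, hac, hbc⟩ |
    ⟨a, b, c, d, he, he', hab, hbc, hcd, hda, hnac, hnbd, hac', hbd'⟩⟩ := h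
  · subst he; subst he'
    constructor
    · intro hP
      exact pcoord_of (triangle_coord hgf hf hab hac hbc (hP a b rfl))
    · intro hP
      exact pcoord_of (triangle_coord hgf hf hac hab hbc.symm (hP a c rfl))
  · subst he; subst he'
    constructor
    · intro hP
      exact pcoord_of (square_coord hgf hf hg hab hbc hcd hda hnac hnbd hac' hbd'
        (hP a b rfl))
    · intro hP
      have := square_coord hgf hf hg (a := d) (b := c) (c := b) (d := a)
        hcd.symm hbc.symm hab.symm hda.symm
        (fun hh => hnbd hh.symm) (fun hh => hnac hh.symm)
        (fun hh => hbd' hh.symm) (fun hh => hac' hh.symm)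
        (hP d c rfl)
      exact pcoord_of this
  
lemma eqv_coord (hgf : ∀ v, g (f v) = v)
    (hf : ∀ u v, G.Adj u v → HammingAdj (f u) (f v))
    (hg : ∀ x y, HammingAdj x y → g x = g y ∨ G.Adj (g x) (g y))
    {e e' : Sym2 V} (h : Relation.EqvGen (QMEdgeRel G) e e') (i : ι) :
    Pcoord f i e ↔ Pcoord f i e' := by
  induction h with
  | rel x y hxy => exact rel_coord hgf hf hg hxy i
  | refl x => exact Iff.rfl
  | symm x y _ ih => exact ih.symm
  | trans x y z _ _ ih1 ih2 => exact ih1.trans ih2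

lemma walk_diff (hf : ∀ u v, G.Adj u v → HammingAdj (f u) (f v))
    {u v : V} (w : G.Walk u v) :
    ∃ s : Finset ι, s.card ≤ w.length ∧ ∀ j ∉ s, f u j = f v j := by
  classical
  induction w with
  | nil => exact ⟨∅, by simp, by simp⟩
  | cons h p ih =>
    obtain ⟨s, hcard, hs⟩ := ih
    obtain ⟨m, hm, hoff⟩ := hf _ _ h
    refine ⟨insert m s, ?_, ?_⟩
    · simp only [SimpleGraph.Walk.length_cons]
      calc (insert m s).card ≤ s.card + 1 := Finset.card_insert_le _ _
        _ ≤ p.length + 1 := by omega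
    · intro j hj
      simp only [Finset.mem_insert, not_or] at hj
      rw [hoff j hj.1, hs j hj.2]

lemma dist_le_card (hconn : G.Connected)
    (hg : ∀ x y, HammingAdj x y → g x = g y ∨ G.Adj (g x) (g y))
    (s : Finset ι) :
    ∀ x y : ∀ i, K i, (∀ j ∉ s, x j = y j) → G.dist (g x) (g y) ≤ s.card := by
  classical
  induction s using Finset.induction_on with
  | empty =>
    intro x y hxy
    have : x = y := funext fun j => hxy j (by simp)
    rw [this]
    simp [SimpleGraph.dist_self]
  | insert i s hi ih =>
    intro x y hxy
    have h1 : G.dist (g x) (g (Function.update x i (y i))) ≤ 1 := by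
      rcases agree_off (g := g) hg i
        (fun j hj => (Function.update_of_ne hj (y i) x).symm) with heq | hadj
      · rw [heq, SimpleGraph.dist_self]; omega
      · rw [← SimpleGraph.dist_eq_one_iff_adj] at hadj; omega
    have h2 : G.dist (g (Function.update x i (y i))) (g y) ≤ s.card := by
      apply ih
      intro j hj
      by_cases hji : j = i
      · subst hji; simp
      · rw [Function.update_of_ne hji]
        exact hxy j (by simp [hji, hj])
    calc G.dist (g x) (g y)
        ≤ G.dist (g x) (g (Function.update x i (y i)))
          + G.dist (g (Function.update x i (y i))) (g y) := hconn.dist_triangle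
      _ ≤ 1 + s.card := by omega
      _ = (insert i s).card := by rw [Finset.card_insert_of_notMem hi]; omega

/-- Key comparison: if `f c` and `f a` agree off `i` and `f z i ≠ f a i`,
then `dist c z ≤ dist a z`. -/
lemma dist_compare (hconn : G.Connected) (hgf : ∀ v, g (f v) = v)
    (hf : ∀ u v, G.Adj u v → HammingAdj (f u) (f v))
    (hg : ∀ x y, HammingAdj x y → g x = g y ∨ G.Adj (g x) (g y))
    {c a z : V} {i : ι} (hca : ∀ j, j ≠ i → f c j = f a j)
    (hz : f z i ≠ f a i) : G.dist c z ≤ G.dist a z := by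
  classical
  obtain ⟨w, hw⟩ := (hconn a z).exists_walk_length_eq_dist
  obtain ⟨s₀, hcard₀, hs₀⟩ := walk_diff hf w
  set s : Finset ι := s₀.filter (fun j => f a j ≠ f z j) with hsdef
  have hcard : s.card ≤ G.dist a z := by
    calc s.card ≤ s₀.card := Finset.card_filter_le _ _
      _ ≤ w.length := hcard₀
      _ = G.dist a z := hw
  have hsout : ∀ j ∉ s, f a j = f z j := by
    intro j hj
    by_cases hj0 : j ∈ s₀
    · by_contra hne
      exact hj (Finset.mem_filter.mpr ⟨hj0, hne⟩)
    · exact hs₀ j hj0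
  have hins : i ∈ s := by
    by_contra hni
    exact hz ((hsout i hni).symm)
  by_cases hcz : f c i = f z i
  · -- use s.erase i
    have key : ∀ j ∉ s.erase i, f c j = f z j := by
      intro j hj
      by_cases hji : j = i
      · subst hji; exact hcz
      · have hjs : j ∉ s := fun hh => hj (Finset.mem_erase.mpr ⟨hji, hh⟩)
        rw [hca j hji]
        exact hsout j hjs
    have := dist_le_card (g := g) hconn hg (s.erase i) (f c) (f z) key
    rw [hgf, hgf] at this
    have hle : (s.erase i).card = s.card - 1 := Finset.card_erase_of_mem hins
    have : G.dist c z ≤ s.card - 1 := by omega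
    omega
  · have key : ∀ j ∉ s, f c j = f z j := by
      intro j hj
      have hji : j ≠ i := fun hh => hj (hh ▸ hins)
      rw [hca j hji]
      exact hsout j hj
    have := dist_le_card (g := g) hconn hg s (f c) (f z) key
    rw [hgf, hgf] at this
    omega

end Aux

/-- in a quasi-median graph, if a hyperplane J crosses a gated
subgraph Y and C is a clique of X all of whose edges lie in J, then C ⊆ Y as soon
as C meets Y. -/
theorem stmt_13 (G : SimpleGraph V) (hqm : IsQuasiMedianGraph G)
    (Y : Set V) (hY : IsGated G Y)
    (J : Set (Sym2 V)) (hJ : IsHyperplane G J)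
    (hcross : ∃ a b : V, a ∈ Y ∧ b ∈ Y ∧ s(a, b) ∈ J)
    (C : Set V)
    (hcomplete : ∀ a ∈ C, ∀ b ∈ C, a ≠ b → G.Adj a b)
    (hmax : ∀ c : V, c ∉ C → ∃ a ∈ C, ¬ G.Adj a c)
    (hCJ : ∀ a ∈ C, ∀ b ∈ C, a ≠ b → s(a, b) ∈ J)
    (hCnontriv : ∃ a ∈ C, ∃ b ∈ C, a ≠ b)
    (hmeet : ∃ a, a ∈ C ∧ a ∈ Y) :
    C ⊆ Y := by
  obtain ⟨hconn, ι, K, f, g, hgf, hf, hg⟩ := hqm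
  obtain ⟨a, haC, haY⟩ := hmeet
  obtain ⟨p, q, hpY, hqY, hpqJ⟩ := hcross
  obtain ⟨e0, he0, hJeq⟩ := hJ
  intro c hcC
  by_cases hca : c = a
  · subst hca; exact haY
  -- a and c are adjacent and s(a,c) ∈ J
  have hadj : G.Adj a c := hcomplete a haC c hcC (fun hh => hca hh.symm)
  have hacJ : s(a, c) ∈ J := hCJ a haC c hcC (fun hh => hca hh.symm)
  -- the gate of c in Y is a (or c ∈ Y)
  obtain ⟨y, hyY, hgate⟩ := hY.2 c
  have hya := hgate a haY
  have hdca : G.dist c a = 1 := SimpleGraph.dist_eq_one_iff_adj.mpr hadj.symm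
  rw [hdca] at hya
  by_cases hcy : G.dist c y = 0
  · have : c = y := (hconn.dist_eq_zero_iff).mp hcy
    rw [this]; exact hyY
  · -- then dist c y = 1, dist y a = 0, so y = a
    have hcy1 : G.dist c y = 1 ∧ G.dist y a = 0 := by omega
    have hyaeq : y = a := (hconn.dist_eq_zero_iff).mp hcy1.2
    subst hyaeq
    -- gate property: ∀ z ∈ Y, dist c z = 1 + dist y z
    have hgate' : ∀ z ∈ Y, G.dist c z = 1 + G.dist y z := by
      intro z hz
      rw [hgate z hz, hcy1.1]
    -- coordinate of edge (a, c)
    obtain ⟨i, hi, hoff⟩ := hf y c hadj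
    have hca' : ∀ j, j ≠ i → f c j = f y j := fun j hj => (hoff j hj).symm
    -- every z ∈ Y satisfies f z i = f y i
    have hYcoord : ∀ z ∈ Y, f z i = f y i := by
      intro z hz
      by_contra hne
      have := dist_compare (G := G) hconn hgf hf hg hca' hne
      have := hgate' z hz
      omega
    -- but edge (p, q) ∈ J has f p i ≠ f q i
    have hchain : Relation.EqvGen (QMEdgeRel G) s(y, c) s(p, q) := by
      rw [hJeq] at hacJ hpqJ
      exact Relation.EqvGen.trans _ _ _ (Relation.EqvGen.symm _ _ hacJ) hpqJ
    have hPac : Pcoord f i s(y, c) := pcoord_of hi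
    have hPpq : Pcoord f i s(p, q) :=
      (eqv_coord hgf hf hg hchain i).mp hPac
    have : f p i ≠ f q i := hPpq p q rfl
    rw [hYcoord p hpY, hYcoord q hqY] at this
    exact absurd rfl this
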